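/- For all real x > 0, one has 3·sinh(x)/(2 + cosh(x)) < x < (3 + x²/10)·sinh(x)/(2 + cosh(x) + x²/10). -/

import Mathlib

open Real

private lemma pos_of_pos_deriv (f f' : ℝ → ℝ) (hf : ∀ y : ℝ, HasDerivAt f (f' y) y)
    (hd : ∀ y : ℝ, 0 < y → 0 < f' y) (h0 : f 0 = 0) {x : ℝ} (hx : 0 < x) : 0 < f x := by
  have hmono : StrictMonoOn f (Set.Ici 0) := by
    apply strictMonoOn_of_deriv_pos (convex_Ici 0)
    · exact fun y _ => (hf y).continuousAt.continuousWithinAt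
    · intro y hy
      rw [interior_Ici] at hy
      rw [(hf y).deriv]
      exact hd y hy
  have := hmono Set.self_mem_Ici (Set.mem_Ici.2 hx.le) hx
  rwa [h0] at this

/-- `x cosh x - sinh x > 0` for `x > 0`. -/
private lemma lemA {x : ℝ} (hx : 0 < x) : 0 < x * Real.cosh x - Real.sinh x := by
  refine pos_of_pos_deriv (fun y => y * Real.cosh y - Real.sinh y)
    (fun y => y * Real.sinh y) (fun y => ?_) (fun y hy => ?_) (by simp) hx
  · have h : HasDerivAt (fun y : ℝ => y * Real.cosh y - Real.sinh y)
        (1 * Real.cosh y + y * Real.sinh y - Real.cosh y) y :=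
      ((hasDerivAt_id' y).mul (Real.hasDerivAt_cosh y)).sub (Real.hasDerivAt_sinh y)
    convert h using 1; ring
  · exact mul_pos hy (Real.sinh_pos_iff.2 hy)

/-- `2 - 2 cosh x + x sinh x > 0` for `x > 0`. -/
private lemma lemH {x : ℝ} (hx : 0 < x) : 0 < 2 - 2 * Real.cosh x + x * Real.sinh x := by
  refine pos_of_pos_deriv (fun y => 2 - 2 * Real.cosh y + y * Real.sinh y)
    (fun y => y * Real.cosh y - Real.sinh y) (fun y => ?_) (fun y hy => lemA hy)
    (by simp) hx
  have h : HasDerivAt (fun y : ℝ => 2 - 2 * Real.cosh y + y * Real.sinh y)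
      (0 - 2 * Real.sinh y + (1 * Real.sinh y + y * Real.cosh y)) y :=
    ((hasDerivAt_const y (2:ℝ)).sub ((Real.hasDerivAt_cosh y).const_mul 2)).add
      ((hasDerivAt_id' y).mul (Real.hasDerivAt_sinh y))
  convert h using 1; ring

/-- Left inequality in unfractioned form. -/
private lemma lemF {x : ℝ} (hx : 0 < x) : 0 < x * (2 + Real.cosh x) - 3 * Real.sinh x := by
  refine pos_of_pos_deriv (fun y => y * (2 + Real.cosh y) - 3 * Real.sinh y)
    (fun y => 2 - 2 * Real.cosh y + y * Real.sinh y) (fun y => ?_) (fun y hy => lemH hy)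
    (by simp) hx
  have h : HasDerivAt (fun y : ℝ => y * (2 + Real.cosh y) - 3 * Real.sinh y)
      (1 * (2 + Real.cosh y) + y * (0 + Real.sinh y) - 3 * Real.cosh y) y :=
    ((hasDerivAt_id' y).mul ((hasDerivAt_const y (2:ℝ)).add (Real.hasDerivAt_cosh y))).sub
      ((Real.hasDerivAt_sinh y).const_mul 3)
  convert h using 1; ring

/-- `(x²+2) sinh x - 2x cosh x > 0` for `x > 0`. -/
private lemma lemG {x : ℝ} (hx : 0 < x) :
    0 < (x ^ 2 + 2) * Real.sinh x - 2 * x * Real.cosh x := by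
  refine pos_of_pos_deriv (fun y => (y ^ 2 + 2) * Real.sinh y - 2 * y * Real.cosh y)
    (fun y => y ^ 2 * Real.cosh y) (fun y => ?_) (fun y hy => by positivity)
    (by simp) hx
  have h1 : HasDerivAt (fun y : ℝ => (y ^ 2 + 2) * Real.sinh y)
      ((2 * y ^ 1 + 0) * Real.sinh y + (y ^ 2 + 2) * Real.cosh y) y :=
    (((hasDerivAt_pow 2 y).add (hasDerivAt_const y (2:ℝ)))).mul (Real.hasDerivAt_sinh y)
  have h2 : HasDerivAt (fun y : ℝ => 2 * y * Real.cosh y)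
      (2 * 1 * Real.cosh y + 2 * y * Real.sinh y) y :=
    (((hasDerivAt_id' y).const_mul (2:ℝ))).mul (Real.hasDerivAt_cosh y)
  have h := h1.sub h2
  exact h.congr_deriv (by ring)

/-- `6 cosh x - 6 - 4x sinh x + x² cosh x > 0` for `x > 0`. -/
private lemma lemF3 {x : ℝ} (hx : 0 < x) :
    0 < 6 * Real.cosh x - 6 - 4 * x * Real.sinh x + x ^ 2 * Real.cosh x := by
  refine pos_of_pos_deriv
    (fun y => 6 * Real.cosh y - 6 - 4 * y * Real.sinh y + y ^ 2 * Real.cosh y)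
    (fun y => (y ^ 2 + 2) * Real.sinh y - 2 * y * Real.cosh y)
    (fun y => ?_) (fun y hy => lemG hy) (by simp) hx
  have h1 : HasDerivAt (fun y : ℝ => 6 * Real.cosh y - 6) (6 * Real.sinh y - 0) y :=
    ((Real.hasDerivAt_cosh y).const_mul 6).sub (hasDerivAt_const y (6:ℝ))
  have h2 : HasDerivAt (fun y : ℝ => 4 * y * Real.sinh y)
      (4 * 1 * Real.sinh y + 4 * y * Real.cosh y) y :=
    (((hasDerivAt_id' y).const_mul (4:ℝ))).mul (Real.hasDerivAt_sinh y)
  have h3 : HasDerivAt (fun y : ℝ => y ^ 2 * Real.cosh y)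
      (2 * y ^ 1 * Real.cosh y + y ^ 2 * Real.sinh y) y :=
    (hasDerivAt_pow 2 y).mul (Real.hasDerivAt_cosh y)
  have h := (h1.sub h2).add h3
  exact h.congr_deriv (by ring)

/-- `12 sinh x + x² sinh x - 6x cosh x - 6x > 0` for `x > 0`. -/
private lemma lemF2 {x : ℝ} (hx : 0 < x) :
    0 < 12 * Real.sinh x + x ^ 2 * Real.sinh x - 6 * x * Real.cosh x - 6 * x := by
  refine pos_of_pos_deriv
    (fun y => 12 * Real.sinh y + y ^ 2 * Real.sinh y - 6 * y * Real.cosh y - 6 * y)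
    (fun y => 6 * Real.cosh y - 6 - 4 * y * Real.sinh y + y ^ 2 * Real.cosh y)
    (fun y => ?_) (fun y hy => lemF3 hy) (by simp) hx
  have h1 : HasDerivAt (fun y : ℝ => 12 * Real.sinh y) (12 * Real.cosh y) y :=
    (Real.hasDerivAt_sinh y).const_mul 12
  have h2 : HasDerivAt (fun y : ℝ => y ^ 2 * Real.sinh y)
      (2 * y ^ 1 * Real.sinh y + y ^ 2 * Real.cosh y) y :=
    (hasDerivAt_pow 2 y).mul (Real.hasDerivAt_sinh y)
  have h3 : HasDerivAt (fun y : ℝ => 6 * y * Real.cosh y)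
      (6 * 1 * Real.cosh y + 6 * y * Real.sinh y) y :=
    (((hasDerivAt_id' y).const_mul (6:ℝ))).mul (Real.hasDerivAt_cosh y)
  have h4 : HasDerivAt (fun y : ℝ => 6 * y) (6 * 1 : ℝ) y :=
    (hasDerivAt_id' y).const_mul (6:ℝ)
  have h := ((h1.add h2).sub h3).sub h4
  exact h.congr_deriv (by ring)

/-- `20 cosh x - 20 + x² cosh x - 3x² - 8x sinh x > 0` for `x > 0`. -/
private lemma lemF1 {x : ℝ} (hx : 0 < x) :
    0 < 20 * Real.cosh x - 20 + x ^ 2 * Real.cosh x - 3 * x ^ 2 - 8 * x * Real.sinh x := by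
  refine pos_of_pos_deriv
    (fun y => 20 * Real.cosh y - 20 + y ^ 2 * Real.cosh y - 3 * y ^ 2 - 8 * y * Real.sinh y)
    (fun y => 12 * Real.sinh y + y ^ 2 * Real.sinh y - 6 * y * Real.cosh y - 6 * y)
    (fun y => ?_) (fun y hy => lemF2 hy) (by simp) hx
  have h1 : HasDerivAt (fun y : ℝ => 20 * Real.cosh y - 20) (20 * Real.sinh y - 0) y :=
    ((Real.hasDerivAt_cosh y).const_mul 20).sub (hasDerivAt_const y (20:ℝ))
  have h2 : HasDerivAt (fun y : ℝ => y ^ 2 * Real.cosh y)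
      (2 * y ^ 1 * Real.cosh y + y ^ 2 * Real.sinh y) y :=
    (hasDerivAt_pow 2 y).mul (Real.hasDerivAt_cosh y)
  have h3 : HasDerivAt (fun y : ℝ => 3 * y ^ 2) (3 * (2 * y ^ 1)) y :=
    (hasDerivAt_pow 2 y).const_mul 3
  have h4 : HasDerivAt (fun y : ℝ => 8 * y * Real.sinh y)
      (8 * 1 * Real.sinh y + 8 * y * Real.cosh y) y :=
    (((hasDerivAt_id' y).const_mul (8:ℝ))).mul (Real.hasDerivAt_sinh y)
  have h := (((h1.add h2).sub h3).sub h4)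
  exact h.congr_deriv (by ring)

/-- Right inequality in unfractioned form. -/
private lemma lemFR {x : ℝ} (hx : 0 < x) :
    0 < (30 + x ^ 2) * Real.sinh x - x * (20 + 10 * Real.cosh x + x ^ 2) := by
  refine pos_of_pos_deriv
    (fun y => (30 + y ^ 2) * Real.sinh y - y * (20 + 10 * Real.cosh y + y ^ 2))
    (fun y => 20 * Real.cosh y - 20 + y ^ 2 * Real.cosh y - 3 * y ^ 2 - 8 * y * Real.sinh y)
    (fun y => ?_) (fun y hy => lemF1 hy) (by simp) hx
  have h1 : HasDerivAt (fun y : ℝ => (30 + y ^ 2) * Real.sinh y)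
      ((0 + 2 * y ^ 1) * Real.sinh y + (30 + y ^ 2) * Real.cosh y) y :=
    ((hasDerivAt_const y (30:ℝ)).add (hasDerivAt_pow 2 y)).mul (Real.hasDerivAt_sinh y)
  have h2 : HasDerivAt (fun y : ℝ => y * (20 + 10 * Real.cosh y + y ^ 2))
      (1 * (20 + 10 * Real.cosh y + y ^ 2) +
        y * (0 + 10 * Real.sinh y + 2 * y ^ 1)) y :=
    (hasDerivAt_id' y).mul
      (((hasDerivAt_const y (20:ℝ)).add ((Real.hasDerivAt_cosh y).const_mul 10)).add
        (hasDerivAt_pow 2 y))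
  have h := h1.sub h2
  exact h.congr_deriv (by ring)

theorem chen_sandor_inequality (x : ℝ) (hx : 0 < x) :
    3 * Real.sinh x / (2 + Real.cosh x) < x ∧
    x < (3 + x^2/10) * Real.sinh x / (2 + Real.cosh x + x^2/10) := by
  have hc : (1 : ℝ) ≤ Real.cosh x := Real.one_le_cosh x
  constructor
  · have hL := lemF hx
    have hden : (0 : ℝ) < 2 + Real.cosh x := by linarith
    rw [div_lt_iff₀ hden]
    linarith
  · have hR := lemFR hx
    have hden : (0 : ℝ) < 2 + Real.cosh x + x ^ 2 / 10 := by positivity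
    rw [lt_div_iff₀ hden]
    nlinarith [hR]
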